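/- Let d ≥ 2, let P, Q ⊆ Fin K be disjoint subsets with |P| = |Q| = d, and define f(w) = ∏_{k ∈ P} w_k + ∏_{k ∈ Q} w_k (operations in ZMod 2). Then for every nonempty subset S' ⊆ P ∪ Q, the joint influence of S' on f is at least the joint influence of P on f, and Inf_P(f) = 1/2^{d-1}; that is, Inf_{S'}(f) ≥ Inf_P(f) = 1/2^{d-1}. -/
import Mathlib


open Finset

/-- Indicator vector of a finite set of coordinates: `(𝟙_S)_k = 1` iff `k ∈ S`. -/
def indVec {K : ℕ} (S : Finset (Fin K)) : Fin K → ZMod 2 :=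
  fun k => if k ∈ S then 1 else 0

/-- Joint influence of the set `S` of coordinates on the Boolean function `f`:
the normalized count of inputs `w` for which flipping exactly the coordinates in `S`
changes the value of `f`. -/
def jointInf {K : ℕ} (S : Finset (Fin K)) (f : (Fin K → ZMod 2) → ZMod 2) : ℚ :=
  ((Finset.univ.filter fun w : Fin K → ZMod 2 => f (w + indVec S) ≠ f w).card : ℚ) / 2 ^ K

namespace Stmt3Aux

variable {K : ℕ}

def cube (T : Finset (Fin K)) (c : Fin K → ZMod 2) : Finset (Fin K → ZMod 2) :=
  univ.filter fun w => ∀ k ∈ T, w k = c k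

lemma mem_cube {T : Finset (Fin K)} {c : Fin K → ZMod 2} {w : Fin K → ZMod 2} :
    w ∈ cube T c ↔ ∀ k ∈ T, w k = c k := by simp [cube]

lemma card_cube (T : Finset (Fin K)) (c : Fin K → ZMod 2) :
    (cube T c).card = 2 ^ (K - T.card) := by
  classical
  have h1 : (cube T c).card = Fintype.card {w : Fin K → ZMod 2 // ∀ k ∈ T, w k = c k} := by
    rw [Fintype.card_subtype]; rfl
  have e : {w : Fin K → ZMod 2 // ∀ k ∈ T, w k = c k} ≃ ({x : Fin K // x ∉ T} → ZMod 2) :=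
  { toFun := fun w k => w.1 k.1
    invFun := fun v => ⟨fun k => if h : k ∈ T then c k else v ⟨k, h⟩, fun k hk => by simp [hk]⟩
    left_inv := fun w => by
      apply Subtype.ext
      funext k
      by_cases h : k ∈ T
      · simp [h, w.2 k h]
      · simp [h]
    right_inv := fun v => by
      funext k
      simp [k.2] }
  rw [h1, Fintype.card_congr e, Fintype.card_fun]
  congr 1
  · rw [Fintype.card_subtype_compl, Fintype.card_coe, Fintype.card_fin]

lemma cube_inter {T1 T2 : Finset (Fin K)} {c1 c2 : Fin K → ZMod 2} (h : Disjoint T1 T2) :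
    cube T1 c1 ∩ cube T2 c2 = cube (T1 ∪ T2) (fun k => if k ∈ T1 then c1 k else c2 k) := by
  ext w
  simp only [mem_inter, mem_cube]
  constructor
  · rintro ⟨h1, h2⟩ k hk
    rcases mem_union.1 hk with hk1 | hk2
    · rw [if_pos hk1]; exact h1 k hk1
    · rw [if_neg (disjoint_right.1 h hk2)]; exact h2 k hk2
  · intro h'
    refine ⟨fun k hk => ?_, fun k hk => ?_⟩
    · have := h' k (mem_union_left _ hk); rwa [if_pos hk] at this
    · have := h' k (mem_union_right _ hk); rwa [if_neg (disjoint_right.1 h hk)] at this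

lemma cube_disjoint {T1 T2 : Finset (Fin K)} {c1 c2 : Fin K → ZMod 2} {k0 : Fin K}
    (h1 : k0 ∈ T1) (h2 : k0 ∈ T2) (hc : c1 k0 ≠ c2 k0) :
    Disjoint (cube T1 c1) (cube T2 c2) := by
  rw [Finset.disjoint_left]
  intro w hw1 hw2
  exact hc ((mem_cube.1 hw1 k0 h1).symm.trans (mem_cube.1 hw2 k0 h2))

lemma prod_eq_one_iff (T : Finset (Fin K)) (g : Fin K → ZMod 2) :
    ∏ k ∈ T, g k = 1 ↔ ∀ k ∈ T, g k = 1 := by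
  constructor
  · intro h k hk
    by_contra hne
    have h0 : g k = 0 := by
      rcases (show ∀ x : ZMod 2, x = 0 ∨ x = 1 by decide) (g k) with h0 | h1
      · exact h0
      · exact absurd h1 hne
    rw [Finset.prod_eq_zero hk h0] at h
    exact (by decide : (0 : ZMod 2) ≠ 1) h
  · exact Finset.prod_eq_one

lemma prod_flip_iff (T S' : Finset (Fin K)) (w : Fin K → ZMod 2) :
    (∏ k ∈ T, (w k + indVec S' k)) = 1 ↔ w ∈ cube T (fun k => 1 + indVec S' k) := by
  rw [prod_eq_one_iff, mem_cube]
  exact forall₂_congr fun k _ =>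
    (by decide : ∀ x y : ZMod 2, (x + y = 1 ↔ x = 1 + y)) (w k) (indVec S' k)

lemma prod_id_iff (T : Finset (Fin K)) (w : Fin K → ZMod 2) :
    (∏ k ∈ T, w k) = 1 ↔ w ∈ cube T (fun _ => 1) := by
  rw [prod_eq_one_iff, mem_cube]

lemma count_side (P Q S' : Finset (Fin K)) (hPQ : Disjoint P Q)
    (f : (Fin K → ZMod 2) → ZMod 2)
    (hf : ∀ w, f w = (∏ k ∈ P, w k) + ∏ k ∈ Q, w k)
    (hS'P : S' ⊆ P) (hne : S'.Nonempty) :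
    (univ.filter fun w : Fin K → ZMod 2 => f (w + indVec S') ≠ f w).card
      = 2 ^ (K - P.card) * 2 := by
  classical
  obtain ⟨k0, hk0⟩ := hne
  have hk0P : k0 ∈ P := hS'P hk0
  have hc : (fun k => 1 + indVec S' k) k0 ≠ (fun _ : Fin K => (1 : ZMod 2)) k0 := by
    simp only [indVec, if_pos hk0]
    decide
  have hdisj : Disjoint (cube P (fun k => 1 + indVec S' k)) (cube P (fun _ => 1)) :=
    cube_disjoint hk0P hk0P hc
  have hset : (univ.filter fun w : Fin K → ZMod 2 => f (w + indVec S') ≠ f w)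
      = cube P (fun k => 1 + indVec S' k) ∪ cube P (fun _ => 1) := by
    ext w
    simp only [mem_filter, mem_univ, true_and, mem_union]
    rw [hf, hf]
    simp only [Pi.add_apply]
    have hQ : ∀ k ∈ Q, w k + indVec S' k = w k := by
      intro k hk
      have : k ∉ S' := fun h => disjoint_left.1 hPQ (hS'P h) hk
      simp [indVec, this]
    rw [Finset.prod_congr rfl hQ]
    simp only [ne_eq, add_left_inj]
    have hx := prod_flip_iff P S' w
    have hy := prod_id_iff P w
    have hnot : ¬(w ∈ cube P (fun k => 1 + indVec S' k) ∧ w ∈ cube P (fun _ => 1)) := by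
      rintro ⟨h1, h2⟩
      exact (Finset.disjoint_left.1 hdisj h1) h2
    rcases (show ∀ x : ZMod 2, x = 0 ∨ x = 1 by decide) (∏ k ∈ P, (w k + indVec S' k)) with h | h <;>
      rcases (show ∀ x : ZMod 2, x = 0 ∨ x = 1 by decide) (∏ k ∈ P, w k) with h' | h' <;>
      rw [h, h'] <;> rw [h] at hx <;> rw [h'] at hy <;>
      simp only [(by decide : (0:ZMod 2) = 1 ↔ False), (by decide : (1:ZMod 2) = 1 ↔ True),
        false_iff, true_iff] at hx hy <;>
      constructor <;> intro hh <;> first | tauto | (exact absurd rfl hh) | decide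
  rw [hset, card_union_of_disjoint hdisj, card_cube, card_cube]
  ring

lemma count_both (P Q S' : Finset (Fin K)) (hPQ : Disjoint P Q)
    (f : (Fin K → ZMod 2) → ZMod 2)
    (hf : ∀ w, f w = (∏ k ∈ P, w k) + ∏ k ∈ Q, w k)
    (hA : (S' ∩ P).Nonempty) (hB : (S' ∩ Q).Nonempty) :
    (univ.filter fun w : Fin K → ZMod 2 => f (w + indVec S') ≠ f w).card
      = (2 ^ (K - P.card) * 2 - 2 ^ (K - (P.card + Q.card)) * 4)
        + (2 ^ (K - Q.card) * 2 - 2 ^ (K - (P.card + Q.card)) * 4) := by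
  classical
  let c1' : Fin K → ZMod 2 := fun k => 1 + indVec S' k
  let ones' : Fin K → ZMod 2 := fun _ => 1
  obtain ⟨k0, hk0⟩ := hA
  obtain ⟨k1, hk1⟩ := hB
  rw [mem_inter] at hk0 hk1
  have hcne : ∀ k ∈ S', (fun k => 1 + indVec S' k) k ≠ (fun _ : Fin K => (1:ZMod 2)) k := by
    intro k hk
    simp only [indVec, if_pos hk]
    decide
  have hd12 : Disjoint (cube P (fun k => 1 + indVec S' k)) (cube P (fun _ => (1:ZMod 2))) := cube_disjoint hk0.2 hk0.2 (hcne _ hk0.1)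
  have hd34 : Disjoint (cube Q (fun k => 1 + indVec S' k)) (cube Q (fun _ => (1:ZMod 2))) := cube_disjoint hk1.2 hk1.2 (hcne _ hk1.1)
  set X := cube P (fun k => 1 + indVec S' k) ∪ cube P (fun _ => (1:ZMod 2)) with hX
  set Y := cube Q (fun k => 1 + indVec S' k) ∪ cube Q (fun _ => (1:ZMod 2)) with hY
  have key : ∀ x y z t : ZMod 2, ¬(x = 1 ∧ y = 1) → ¬(z = 1 ∧ t = 1) →
      (¬(x + z = y + t) ↔ (((x = 1 ∨ y = 1) ∧ ¬(z = 1 ∨ t = 1)) ∨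
        ((z = 1 ∨ t = 1) ∧ ¬(x = 1 ∨ y = 1)))) := by decide
  have hset : (univ.filter fun w : Fin K → ZMod 2 => f (w + indVec S') ≠ f w)
      = (X \ Y) ∪ (Y \ X) := by
    ext w
    simp only [mem_filter, mem_univ, true_and, mem_union, mem_sdiff, hX, hY]
    rw [hf, hf]
    simp only [Pi.add_apply, ne_eq, mem_union]
    rw [← prod_flip_iff P S' w, ← prod_id_iff P w, ← prod_flip_iff Q S' w, ← prod_id_iff Q w]
    have hn1 : ¬((∏ k ∈ P, (w k + indVec S' k)) = 1 ∧ (∏ k ∈ P, w k) = 1) := by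
      rintro ⟨u, v⟩
      exact disjoint_left.1 hd12 ((prod_flip_iff P S' w).1 u) ((prod_id_iff P w).1 v)
    have hn2 : ¬((∏ k ∈ Q, (w k + indVec S' k)) = 1 ∧ (∏ k ∈ Q, w k) = 1) := by
      rintro ⟨u, v⟩
      exact disjoint_left.1 hd34 ((prod_flip_iff Q S' w).1 u) ((prod_id_iff Q w).1 v)
    exact key _ _ _ _ hn1 hn2
  have hIcard : (X ∩ Y).card = 2 ^ (K - (P.card + Q.card)) * 4 := by
    have hpq : (P ∪ Q).card = P.card + Q.card := card_union_of_disjoint hPQ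
    have e1 : X ∩ Y = ((cube P c1' ∩ cube Q c1') ∪ (cube P c1' ∩ cube Q ones')) ∪
        ((cube P ones' ∩ cube Q c1') ∪ (cube P ones' ∩ cube Q ones')) := by
      rw [hX, hY, union_inter_distrib_right, inter_union_distrib_left, inter_union_distrib_left]
    have dQ : ∀ a b : Fin K → ZMod 2, Disjoint (cube P a ∩ cube Q c1') (cube P b ∩ cube Q ones') :=
      fun a b => Disjoint.mono inter_subset_right inter_subset_right hd34
    have dP : ∀ a b : Fin K → ZMod 2, Disjoint (cube P c1' ∩ cube Q a) (cube P ones' ∩ cube Q b) :=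
      fun a b => Disjoint.mono inter_subset_left inter_subset_left hd12
    rw [e1, card_union_of_disjoint, card_union_of_disjoint (dQ c1' c1'),
        card_union_of_disjoint (dQ ones' ones')]
    · rw [cube_inter hPQ, cube_inter hPQ, cube_inter hPQ, cube_inter hPQ,
        card_cube, card_cube, card_cube, card_cube, hpq]
      ring
    · exact disjoint_union_left.2 ⟨disjoint_union_right.2 ⟨dP c1' c1', dP c1' ones'⟩,
        disjoint_union_right.2 ⟨dP ones' c1', dP ones' ones'⟩⟩
  have hXcard : X.card = 2 ^ (K - P.card) * 2 := by
    rw [hX, card_union_of_disjoint hd12, card_cube, card_cube]; ring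
  have hYcard : Y.card = 2 ^ (K - Q.card) * 2 := by
    rw [hY, card_union_of_disjoint hd34, card_cube, card_cube]; ring
  have h1 : (X \ Y).card = X.card - (X ∩ Y).card := by
    have := Finset.card_sdiff_add_card_inter X Y
    omega
  have h2 : (Y \ X).card = Y.card - (X ∩ Y).card := by
    have := Finset.card_sdiff_add_card_inter Y X
    rw [inter_comm] at this
    omega
  rw [hset, card_union_of_disjoint disjoint_sdiff_sdiff, h1, h2, hXcard, hYcard, hIcard]

end Stmt3Aux


theorem stmt3 (K d : ℕ) (hd : 2 ≤ d)
    (P Q : Finset (Fin K)) (hPQ : Disjoint P Q) (hP : P.card = d) (hQ : Q.card = d)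
    (f : (Fin K → ZMod 2) → ZMod 2)
    (hf : ∀ w, f w = (∏ k ∈ P, w k) + ∏ k ∈ Q, w k)
    (S' : Finset (Fin K)) (hS' : S' ⊆ P ∪ Q) (hne : S'.Nonempty) :
    jointInf S' f ≥ jointInf P f ∧ jointInf P f = 1 / 2 ^ (d - 1) := by
  classical
  have hKd : 2 * d ≤ K := by
    have h1 : (P ∪ Q).card = 2 * d := by
      rw [card_union_of_disjoint hPQ, hP, hQ]; ring
    have h2 : (P ∪ Q).card ≤ K := by
      simpa using card_le_card (subset_univ (P ∪ Q))
    omega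
  have h4 : 4 ≤ 2 ^ d := by
    calc (4 : ℕ) = 2 ^ 2 := rfl
    _ ≤ 2 ^ d := Nat.pow_le_pow_right (by norm_num) hd
  have hPne : P.Nonempty := card_pos.1 (by omega)
  have cntP : (univ.filter fun w : Fin K → ZMod 2 => f (w + indVec P) ≠ f w).card
      = 2 ^ (K - d) * 2 := by
    have := Stmt3Aux.count_side P Q P hPQ f hf (Finset.Subset.refl P) hPne
    rwa [hP] at this
  have hinfP : jointInf P f = 1 / 2 ^ (d - 1) := by
    rw [jointInf, cntP, div_eq_div_iff (by positivity) (by positivity)]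
    push_cast
    rw [one_mul, show ((2:ℚ) ^ (K - d) * 2) * 2 ^ (d - 1) = 2 ^ ((K - d) + 1 + (d - 1)) by
      rw [pow_add, pow_add, pow_one]]
    congr 1
    omega
  refine ⟨?_, hinfP⟩
  by_cases hA : (S' ∩ P).Nonempty <;> by_cases hB : (S' ∩ Q).Nonempty
  · -- both nonempty
    have cntS := Stmt3Aux.count_both P Q S' hPQ f hf hA hB
    rw [hP, hQ] at cntS
    have hnat : 2 ^ (K - d) * 2 ≤ (2 ^ (K - d) * 2 - 2 ^ (K - (d + d)) * 4)
        + (2 ^ (K - d) * 2 - 2 ^ (K - (d + d)) * 4) := by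
      have e : (2 : ℕ) ^ (K - d) = 2 ^ (K - (d + d)) * 2 ^ d := by
        rw [← pow_add]; congr 1; omega
      rw [e]
      have h1 : 2 ^ (K - (d + d)) * 4 ≤ 2 ^ (K - (d + d)) * 2 ^ d :=
        Nat.mul_le_mul_left _ h4
      generalize 2 ^ (K - (d + d)) * 2 ^ d = x at h1 ⊢
      omega
    rw [ge_iff_le, jointInf, jointInf, cntP, cntS]
    gcongr
  · -- S' ⊆ P
    have hsub : S' ⊆ P := by
      intro k hk
      rcases mem_union.1 (hS' hk) with h | h
      · exact h
      · exact absurd ⟨k, mem_inter.2 ⟨hk, h⟩⟩ hB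
    have cntS := Stmt3Aux.count_side P Q S' hPQ f hf hsub hne
    rw [hP] at cntS
    rw [ge_iff_le, jointInf, jointInf, cntP, cntS]
  · -- S' ⊆ Q
    have hsub : S' ⊆ Q := by
      intro k hk
      rcases mem_union.1 (hS' hk) with h | h
      · exact absurd ⟨k, mem_inter.2 ⟨hk, h⟩⟩ hA
      · exact h
    have hf' : ∀ w, f w = (∏ k ∈ Q, w k) + ∏ k ∈ P, w k := fun w => by
      rw [hf w, add_comm]
    have cntS := Stmt3Aux.count_side Q P S' hPQ.symm f hf' hsub hne
    rw [hQ] at cntS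
    rw [ge_iff_le, jointInf, jointInf, cntP, cntS]
  · -- impossible
    obtain ⟨k, hk⟩ := hne
    rcases mem_union.1 (hS' hk) with h | h
    · exact absurd ⟨k, mem_inter.2 ⟨hk, h⟩⟩ hA
    · exact absurd ⟨k, mem_inter.2 ⟨hk, h⟩⟩ hB
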